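/- A bipartite pure state |ψ⟩_{RS} has Schmidt rank at most r if and only if (Π^A_{R,r+1} ⊗ Π^A_{S,r+1})(|ψ⟩_{RS}^{⊗(r+1)}) = 0, where Π^A_{R,r+1} is the projection onto the antisymmetric subspace of H_R^{⊗(r+1)} (and similarly for S), viewing |ψ⟩^{⊗(r+1)} in (H_R ⊗ H_S)^{⊗(r+1)} ≅ H_R^{⊗(r+1)} ⊗ H_S^{⊗(r+1)}. -/

import Mathlib

open Matrix Module Submodule

lemma myRank_submatrix_row_le {m n m' : Type*} [Fintype m] [Fintype n] [Fintype m']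
    (M : Matrix m n ℂ) (a : m' → m) : (M.submatrix a id).rank ≤ M.rank := by
  rw [Matrix.rank_eq_finrank_span_row, Matrix.rank_eq_finrank_span_row]
  apply Submodule.finrank_mono
  apply Submodule.span_mono
  rintro x ⟨i, rfl⟩
  exact ⟨a i, rfl⟩

lemma myRank_submatrix_le {m n m' n' : Type*} [Fintype m] [Fintype n] [Fintype m'] [Fintype n']
    (M : Matrix m n ℂ) (a : m' → m) (b : n' → n) : (M.submatrix a b).rank ≤ M.rank := by
  have h1 : M.submatrix a b = ((M.submatrix a id)ᵀ.submatrix b id)ᵀ := by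
    ext i j; rfl
  rw [h1, Matrix.rank_transpose]
  calc ((M.submatrix a id)ᵀ.submatrix b id).rank ≤ (M.submatrix a id)ᵀ.rank :=
        myRank_submatrix_row_le _ _
    _ = (M.submatrix a id).rank := Matrix.rank_transpose _
    _ ≤ M.rank := myRank_submatrix_row_le _ _

lemma exists_li_rows {m n : Type*} [Fintype m] [Fintype n] (M : Matrix m n ℂ) (k : ℕ)
    (h : k ≤ M.rank) : ∃ a : Fin k → m, LinearIndependent ℂ (fun i => M (a i)) := by
  classical
  obtain ⟨b, hb_sub, hb_span, hb_li⟩ := exists_linearIndependent ℂ (Set.range (fun i => M i))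
  have hfin : b.Finite := (Set.finite_range _).subset hb_sub
  haveI : Fintype b := hfin.fintype
  have hcard : k ≤ Fintype.card b := by
    have h1 : finrank ℂ (span ℂ b) = b.toFinset.card := finrank_span_set_eq_card hb_li
    have h2 : M.rank = finrank ℂ (span ℂ b) := by
      rw [Matrix.rank_eq_finrank_span_row, hb_span]
      rfl
    rw [Set.toFinset_card] at h1
    omega
  obtain ⟨e⟩ := Function.Embedding.nonempty_of_card_le (by simpa using hcard :
    Fintype.card (Fin k) ≤ Fintype.card b)
  have hli : LinearIndependent ℂ (fun i : Fin k => ((e i : n → ℂ))) :=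
    hb_li.comp e e.injective
  have hchoice : ∀ i : Fin k, ∃ x : m, M x = (e i : n → ℂ) := fun i => hb_sub (e i).2
  choose a ha using hchoice
  refine ⟨a, ?_⟩
  have : (fun i => M (a i)) = fun i : Fin k => ((e i : n → ℂ)) := funext fun i => ha i
  rw [this]
  exact hli

lemma exists_det_ne {dR dS : ℕ} {r : ℕ} (M : Matrix (Fin dR) (Fin dS) ℂ)
    (h : r < M.rank) :
    ∃ (a : Fin (r + 1) → Fin dR) (b : Fin (r + 1) → Fin dS),
      (M.submatrix a b).det ≠ 0 := by
  obtain ⟨a, ha⟩ := exists_li_rows M (r + 1) h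
  set A : Matrix (Fin (r + 1)) (Fin dS) ℂ := M.submatrix a id with hA
  have hArows : (fun i => A i) = fun i => M (a i) := rfl
  have hrankA : A.rank = r + 1 := by
    have := (show LinearIndependent ℂ (fun i => A i) from hArows ▸ ha).rank_matrix
    simp at this
    exact this
  have hrankAT : r + 1 ≤ Aᵀ.rank := by rw [Matrix.rank_transpose, hrankA]
  obtain ⟨b, hb⟩ := exists_li_rows Aᵀ (r + 1) hrankAT
  set N : Matrix (Fin (r + 1)) (Fin (r + 1)) ℂ := Aᵀ.submatrix b id with hN
  have hNrows : LinearIndependent ℂ (fun i => N i) := hb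
  have hNu : IsUnit N := Matrix.linearIndependent_rows_iff_isUnit.mp hNrows
  have hdet : N.det ≠ 0 := by
    have := (Matrix.isUnit_iff_isUnit_det N).mp hNu
    exact IsUnit.ne_zero this
  refine ⟨a, b, ?_⟩
  have hNeq : N = (M.submatrix a b)ᵀ := by ext i j; rfl
  rw [hNeq, Matrix.det_transpose] at hdet
  exact hdet

lemma det_submatrix_eq_zero_of_rank_le {dR dS : ℕ} {r : ℕ} (M : Matrix (Fin dR) (Fin dS) ℂ)
    (h : M.rank ≤ r) (a : Fin (r + 1) → Fin dR) (b : Fin (r + 1) → Fin dS) :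
    (M.submatrix a b).det = 0 := by
  by_contra hdet
  have hu : IsUnit (M.submatrix a b) :=
    (Matrix.isUnit_iff_isUnit_det _).mpr (isUnit_iff_ne_zero.mpr hdet)
  have : (M.submatrix a b).rank = r + 1 := by
    rw [Matrix.rank_of_isUnit _ hu, Fintype.card_fin]
  have hle := myRank_submatrix_le M a b
  omega

lemma double_sum_eq {dR dS : ℕ} (r : ℕ) (M : Matrix (Fin dR) (Fin dS) ℂ)
    (a : Fin (r + 1) → Fin dR) (b : Fin (r + 1) → Fin dS) :
    ∑ σ : Equiv.Perm (Fin (r + 1)), ∑ τ : Equiv.Perm (Fin (r + 1)),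
        ((Equiv.Perm.sign σ : ℤ) : ℂ) * ((Equiv.Perm.sign τ : ℤ) : ℂ) *
          ∏ k : Fin (r + 1), M (a (σ k)) (b (τ k)) =
      ((r + 1).factorial : ℂ) * (M.submatrix a b)ᵀ.det := by
  have inner : ∀ σ : Equiv.Perm (Fin (r + 1)),
      (∑ τ : Equiv.Perm (Fin (r + 1)),
        ((Equiv.Perm.sign σ : ℤ) : ℂ) * ((Equiv.Perm.sign τ : ℤ) : ℂ) *
          ∏ k : Fin (r + 1), M (a (σ k)) (b (τ k))) = (M.submatrix a b)ᵀ.det := by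
    intro σ
    rw [← Equiv.sum_comp (Equiv.mulRight σ) (fun τ => ((Equiv.Perm.sign σ : ℤ) : ℂ) *
      ((Equiv.Perm.sign τ : ℤ) : ℂ) * ∏ k : Fin (r + 1), M (a (σ k)) (b (τ k)))]
    rw [Matrix.det_apply']
    refine Finset.sum_congr rfl fun ρ _ => ?_
    have hterm : ∀ k, ((Equiv.mulRight σ) ρ) k = ρ (σ k) := fun _ => rfl
    have hprod : (∏ k : Fin (r + 1), M (a (σ k)) (b (((Equiv.mulRight σ) ρ) k))) =
        ∏ j : Fin (r + 1), M (a j) (b (ρ j)) := by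
      simp only [hterm]
      exact Equiv.prod_comp σ (fun j => M (a j) (b (ρ j)))
    have hsign : ((Equiv.Perm.sign ((Equiv.mulRight σ) ρ) : ℤ) : ℂ) =
        ((Equiv.Perm.sign ρ : ℤ) : ℂ) * ((Equiv.Perm.sign σ : ℤ) : ℂ) := by
      have h0 : (Equiv.mulRight σ) ρ = ρ * σ := rfl
      rw [h0, Equiv.Perm.sign_mul]
      push_cast
      ring
    have hsq : ((Equiv.Perm.sign σ : ℤ) : ℂ) * ((Equiv.Perm.sign σ : ℤ) : ℂ) = 1 := by
      rcases Int.units_eq_one_or (Equiv.Perm.sign σ) with h | h <;> rw [h] <;> norm_num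
    have hent : (∏ i : Fin (r + 1), (M.submatrix a b)ᵀ (ρ i) i) =
        ∏ j : Fin (r + 1), M (a j) (b (ρ j)) := rfl
    rw [hprod, hsign, hent]
    linear_combination ((Equiv.Perm.sign ρ : ℤ) : ℂ) *
      (∏ j : Fin (r + 1), M (a j) (b (ρ j))) * hsq
  rw [Finset.sum_congr rfl fun σ _ => inner σ, Finset.sum_const, Finset.card_univ,
    Fintype.card_perm, Fintype.card_fin, nsmul_eq_mul]

/-- A bipartite pure state `ψ` with coefficient matrix `M` has Schmidt rank at
most `r` iff the product of the two antisymmetrizers on `H_R^{⊗(r+1)}` and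
`H_S^{⊗(r+1)}` annihilates `ψ^{⊗(r+1)}`. The tensor power `ψ^{⊗(r+1)}`,
reordered to group the `R` and `S` factors, has coordinates
`(a, b) ↦ ∏ k, M (a k) (b k)`; the condition is stated coordinatewise. -/
theorem schmidt_rank_le_iff_antisymmetric_projection_vanishes
    {dR dS : ℕ} (r : ℕ) (M : Matrix (Fin dR) (Fin dS) ℂ)
    (hψ : ∑ i, ∑ j, Complex.normSq (M i j) = 1) :
    M.rank ≤ r ↔
      ∀ (a : Fin (r + 1) → Fin dR) (b : Fin (r + 1) → Fin dS),
        (((r + 1).factorial : ℂ))⁻¹ * (((r + 1).factorial : ℂ))⁻¹ *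
          ∑ σ : Equiv.Perm (Fin (r + 1)), ∑ τ : Equiv.Perm (Fin (r + 1)),
            ((Equiv.Perm.sign σ : ℤ) : ℂ) * ((Equiv.Perm.sign τ : ℤ) : ℂ) *
              ∏ k : Fin (r + 1), M (a (σ k)) (b (τ k)) = 0 := by
  have hfac : ((r + 1).factorial : ℂ) ≠ 0 :=
    Nat.cast_ne_zero.mpr (Nat.factorial_ne_zero _)
  constructor
  · intro h a b
    rw [double_sum_eq r M a b, Matrix.det_transpose,
      det_submatrix_eq_zero_of_rank_le M h a b]
    ring
  · intro h
    by_contra hlt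
    push_neg at hlt
    obtain ⟨a, b, hdet⟩ := exists_det_ne M hlt
    have hzero := h a b
    rw [double_sum_eq r M a b, Matrix.det_transpose] at hzero
    apply hdet
    rw [show (((r + 1).factorial : ℂ))⁻¹ * (((r + 1).factorial : ℂ))⁻¹ *
        (((r + 1).factorial : ℂ) * (M.submatrix a b).det)
        = (((r + 1).factorial : ℂ))⁻¹ * (M.submatrix a b).det from by
      field_simp] at hzero
    exact (mul_eq_zero.mp hzero).resolve_left (inv_ne_zero hfac)
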